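/- arXiv:1301.2364 — 2 statements merged into one kernel-verified Lean document; each statement's English description precedes it below -/
import Mathlib

section
/- Let m ≥ 2 be an even natural number. For each integer 1 ≤ j ≤ m/2 − 1, C(j) = (-1)^{m/2 + j − 1} · [−C(m-1, 2j−1) + ∑_{k=0}^{m/2 − j − 1} (C(m-1, 2k+2j)·C(m-1, 2k+1) − C(m-1, 2k)·C(m-1, 2k+2j−1))] equals C(m-1, j + m/2 − 1). -/
open Finset Polynomial

lemma coeff_sq_sub_one_pow (N m : ℕ) :
    (((X:ℤ[X])^2 - 1)^N).coeff (2*m) = (-1:ℤ)^(N-m) * N.choose m := by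
  have h : ((X:ℤ[X])^2 - 1)^N
      = ∑ i ∈ range (N+1), C ((-1:ℤ)^(N-i) * N.choose i) * X^(2*i) := by
    rw [sub_eq_add_neg, add_pow]
    refine Finset.sum_congr rfl fun i _ => ?_
    simp only [C_mul, C_pow, C_neg, C_1, C_eq_natCast, pow_mul]
    ring
  rw [h, finset_sum_coeff]
  simp only [coeff_C_mul, coeff_X_pow]
  by_cases hm : m ≤ N
  · rw [Finset.sum_eq_single m]
    · simp
    · intro i _ hne
      have : ¬ (2*m = 2*i) := by omega
      simp [this]
    · intro h; exact absurd (Finset.mem_range.2 (by omega)) h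
  · rw [Finset.sum_eq_zero, Nat.choose_eq_zero_of_lt (by omega), Nat.cast_zero, mul_zero]
    intro i hi
    have : ¬ (2*m = 2*i) := by simp at hi; omega
    simp [this]

lemma alt_vandermonde (N s : ℕ) (hs : s ≤ N) :
    ∑ i ∈ Finset.range (N - s + 1), (-1:ℤ)^i * N.choose i * N.choose (i + s)
      = (((X:ℤ[X])^2 - 1)^N).coeff (N + s) := by
  have hfac : ((X:ℤ[X])^2 - 1)^N = (X + C 1)^N * (X + C (-1))^N := by
    rw [← mul_pow]
    congr 1
    simp only [C_neg, C_1]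
    ring
  rw [hfac, coeff_mul, Finset.Nat.sum_antidiagonal_eq_sum_range_succ_mk]
  simp only [coeff_X_add_C_pow, one_pow, one_mul]
  rw [Nat.succ_eq_add_one, Finset.range_eq_Ico (a := N + s + 1), Finset.range_eq_Ico (a := N - s + 1),
    ← Finset.sum_Ico_consecutive _ (Nat.zero_le s) (by omega : s ≤ N + s + 1),
    ← Finset.sum_Ico_consecutive _ (by omega : s ≤ N + 1) (by omega : N + 1 ≤ N + s + 1)]
  have h0 : ∑ i ∈ Finset.Ico 0 s, (N.choose i : ℤ) * ((-1)^(N - (N + s - i)) * N.choose (N + s - i)) = 0 := by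
    refine Finset.sum_eq_zero fun k hk => ?_
    simp only [Finset.mem_Ico] at hk
    rw [Nat.choose_eq_zero_of_lt (by omega : N < N + s - k)]
    simp
  have htop : ∑ i ∈ Finset.Ico (N+1) (N+s+1), (N.choose i : ℤ) * ((-1)^(N - (N + s - i)) * N.choose (N + s - i)) = 0 := by
    refine Finset.sum_eq_zero fun k hk => ?_
    simp only [Finset.mem_Ico] at hk
    rw [Nat.choose_eq_zero_of_lt (by omega : N < k)]
    simp
  rw [h0, htop, zero_add, add_zero]
  rw [Finset.sum_Ico_eq_sum_range, Finset.sum_Ico_eq_sum_range]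
  simp only [Nat.sub_zero, zero_add]
  have hlen : N + 1 - s = N - s + 1 := by omega
  rw [hlen]
  refine Finset.sum_congr rfl fun i hi => ?_
  simp only [Finset.mem_range] at hi
  have h1 : N + s - (s + i) = N - i := by omega
  have h2 : N - (N - i) = i := by omega
  have h3 : N.choose (N - i) = N.choose i := Nat.choose_symm (by omega)
  rw [h1, h2, h3, show s + i = i + s by omega]
  ring

lemma sum_range_two_mul (M : ℕ) (f : ℕ → ℤ) :
    ∑ i ∈ Finset.range (2*M), f i = ∑ k ∈ Finset.range M, (f (2*k) + f (2*k+1)) := by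
  induction M with
  | zero => simp
  | succ M ih =>
    rw [show 2*(M+1) = 2*M + 1 + 1 by ring, Finset.sum_range_succ, Finset.sum_range_succ,
      Finset.sum_range_succ, ih]
    ring

lemma key (r j : ℕ) (hj1 : 1 ≤ j) (hjr : j < r) :
    ∑ i ∈ Finset.range (2*(r-j)+1),
      (-1:ℤ)^i * ((r+r-1).choose i) * ((r+r-1).choose (i + (2*j-1)))
      = (-1:ℤ)^(r-j) * ((r+r-1).choose (r+j-1)) := by
  have h1 := alt_vandermonde (r+r-1) (2*j-1) (by omega)
  have h2 := coeff_sq_sub_one_pow (r+r-1) (r+j-1)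
  rw [show (r+r-1) - (2*j-1) = 2*(r-j) by omega] at h1
  rw [show (r+r-1) + (2*j-1) = 2*(r+j-1) by omega] at h1
  rw [h1, h2, show (r+r-1) - (r+j-1) = r - j by omega]

theorem stmt_9 (m : ℕ) (hm : 2 ≤ m) (hme : Even m) (j : ℕ) (hj1 : 1 ≤ j)
    (hj2 : j ≤ m / 2 - 1) :
    (-1 : ℤ) ^ (m / 2 + j - 1) *
      (-((m - 1).choose (2 * j - 1) : ℤ) +
        ∑ k ∈ Finset.range (m / 2 - j),
          (((m - 1).choose (2 * k + 2 * j) : ℤ) * ((m - 1).choose (2 * k + 1)) -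
            ((m - 1).choose (2 * k) : ℤ) * ((m - 1).choose (2 * k + 2 * j - 1)))) =
    ((m - 1).choose (j + m / 2 - 1) : ℤ) := by
  obtain ⟨r, rfl⟩ := hme
  have hdiv : (r + r) / 2 = r := by omega
  rw [hdiv] at hj2 ⊢
  have hjr : j < r := by omega
  set N := r + r - 1 with hN
  have hkey := key r j hj1 hjr
  rw [Finset.sum_range_succ] at hkey
  rw [sum_range_two_mul] at hkey
  -- last term of hkey
  have hlast : (-1:ℤ)^(2*(r-j)) * (N.choose (2*(r-j))) * (N.choose (2*(r-j) + (2*j-1)))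
      = N.choose (2*j-1) := by
    rw [show 2*(r-j) + (2*j-1) = N by omega, Nat.choose_self,
      show 2*(r-j) = N - (2*j-1) by omega, Nat.choose_symm (by omega)]
    rw [show N - (2*j-1) = 2*(r-j) by omega, pow_mul]
    norm_num
  rw [hlast] at hkey
  -- paired sum equals minus the statement sum
  have hpair : ∑ k ∈ Finset.range (r-j),
      ((-1:ℤ)^(2*k) * (N.choose (2*k)) * (N.choose (2*k + (2*j-1)))
        + (-1:ℤ)^(2*k+1) * (N.choose (2*k+1)) * (N.choose (2*k+1 + (2*j-1))))
      = - ∑ k ∈ Finset.range (r-j),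
          ((N.choose (2 * k + 2 * j) : ℤ) * (N.choose (2 * k + 1)) -
            (N.choose (2 * k) : ℤ) * (N.choose (2 * k + 2 * j - 1))) := by
    rw [← Finset.sum_neg_distrib]
    refine Finset.sum_congr rfl fun k _ => ?_
    rw [show 2*k + (2*j-1) = 2*k + 2*j - 1 by omega,
      show 2*k+1 + (2*j-1) = 2*k + 2*j by omega,
      pow_succ, pow_mul]
    norm_num
    ring
  rw [hpair] at hkey
  -- so the statement sum S satisfies: -S + C(2j-1) = (-1)^(r-j) * C(r+j-1)
  have hS : ∑ k ∈ Finset.range (r-j),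
          ((N.choose (2 * k + 2 * j) : ℤ) * (N.choose (2 * k + 1)) -
            (N.choose (2 * k) : ℤ) * (N.choose (2 * k + 2 * j - 1)))
      = (N.choose (2*j-1) : ℤ) - (-1:ℤ)^(r-j) * (N.choose (r+j-1)) := by
    linarith [hkey]
  rw [show r + r - 1 = N from rfl] at *
  rw [hS]
  rw [show j + r - 1 = r + j - 1 by omega]
  have hpow : (-1:ℤ)^(r+j-1) * (-1:ℤ)^(r-j) = -1 := by
    rw [← pow_add, show r+j-1+(r-j) = 2*r - 1 by omega]
    exact Odd.neg_one_pow ⟨r-1, by omega⟩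
  linear_combination (-(N.choose (r+j-1) : ℤ)) * hpow
end

section
/- For an even natural number m = 2r and integers 1 ≤ j ≤ r − 1, setting n = r − j, the identity (−1)^n · ∑_{k=0}^{n} (4k − 2n + 1) · C(m, 2k+1) · C(m, 2n−2k) = m · C(m−1, n) holds. -/
open Polynomial Finset

private lemma split_even_odd (f : ℕ → ℤ) : ∀ n : ℕ,
    ∑ i ∈ range (2*n+2), f i
      = (∑ k ∈ range (n+1), f (2*k)) + ∑ k ∈ range (n+1), f (2*k+1)
  | 0 => by simp [Finset.sum_range_succ]
  | (n+1) => by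
    have h : 2*(n+1)+2 = (2*n+2)+1+1 := by ring
    have e1 : 2*(n+1) = (2*n+2) := by ring
    have e3 : (2*n+2)+1 = 2*n+3 := by ring
    rw [h, Finset.sum_range_succ, Finset.sum_range_succ, split_even_odd f n,
      Finset.sum_range_succ (fun k => f (2*k)) (n+1),
      Finset.sum_range_succ (fun k => f (2*k+1)) (n+1), e1, e3]
    ring

private lemma split_even_odd' (f : ℕ → ℤ) : ∀ n : ℕ,
    ∑ i ∈ range (2*n+1), f i
      = (∑ k ∈ range (n+1), f (2*k)) + ∑ k ∈ range n, f (2*k+1)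
  | 0 => by simp
  | (n+1) => by
    have h : 2*(n+1)+1 = (2*n+1)+1+1 := by ring
    have e1 : 2*(n+1) = (2*n+1)+1 := by ring
    rw [h, Finset.sum_range_succ, Finset.sum_range_succ, split_even_odd' f n,
      Finset.sum_range_succ (fun k => f (2*k)) (n+1),
      Finset.sum_range_succ (fun k => f (2*k+1)) n, e1]
    ring

private lemma coeff_one_sub_X_pow (N i : ℕ) :
    ((1 - X : Polynomial ℤ) ^ N).coeff i = (-1)^i * N.choose i := by
  have h : (1 - X : Polynomial ℤ) = (-1) * (X + C (-1)) := by
    rw [C_neg, C_1]; ring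
  rw [h, mul_pow, ← C_1, ← C_neg, ← C_pow, coeff_C_mul, coeff_X_add_C_pow]
  rcases le_or_gt i N with hi | hi
  · have h1 : (-1:ℤ)^N = (-1)^(N-i) * (-1)^i := by
      rw [← pow_add]; congr 1; omega
    have h2 : ((-1:ℤ)^(N-i)) * ((-1:ℤ)^(N-i)) = 1 := by
      rw [← pow_add]; exact Even.neg_one_pow ⟨N-i, rfl⟩
    rw [h1]
    linear_combination ((-1:ℤ)^i * (N.choose i : ℤ)) * h2
  · rw [Nat.choose_eq_zero_of_lt hi]; ring

set_option maxRecDepth 4000 in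
private lemma coeff_one_sub_X_sq_pow (N d : ℕ) :
    ((1 - X^2 : Polynomial ℤ) ^ N).coeff d
      = if d % 2 = 0 then ((-1:ℤ))^(d/2) * N.choose (d/2) else 0 := by
  have h : (1 - X^2 : Polynomial ℤ)^N
      = ∑ j ∈ range (N+1), C ((-1:ℤ)^j * N.choose j) * X^(2*j) := by
    rw [sub_eq_add_neg, add_comm, add_pow]
    apply Finset.sum_congr rfl
    intro j hj
    rw [show (-(X^2 : Polynomial ℤ))^j = (-1)^j * (X^2)^j from neg_pow _ _,
      one_pow, mul_one, ← pow_mul]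
    simp only [C_mul, C_pow, C_neg, C_1, map_natCast]
    ring
  rw [h, finset_sum_coeff]
  simp only [coeff_C_mul, coeff_X_pow]
  rcases Nat.even_or_odd d with ⟨t, ht⟩ | ⟨t, ht⟩
  · have hd2 : d / 2 = t := by omega
    have hdm : d % 2 = 0 := by omega
    rw [if_pos hdm, hd2]
    rcases le_or_gt t N with h1 | h1
    · rw [Finset.sum_eq_single t]
      · rw [if_pos (by omega), mul_one]
      · intro b _ hb; rw [if_neg (by omega), mul_zero]
      · intro hc; exact absurd (Finset.mem_range.2 (by omega)) hc
    · rw [Nat.choose_eq_zero_of_lt h1, Finset.sum_eq_zero]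
      · push_cast; ring
      · intro b hb
        rw [Finset.mem_range] at hb
        rw [if_neg (by omega), mul_zero]
  · rw [if_neg (by omega)]
    apply Finset.sum_eq_zero
    intro b hb
    rw [if_neg (by omega), mul_zero]

private lemma alt_vandermonde_s19 (m n : ℕ) (hm : 1 ≤ m) (hn : 1 ≤ n) :
    ∑ i ∈ range (2*n+1), (-1:ℤ)^i * (m-1).choose i * m.choose (2*n - i)
      = (-1)^n * (m-1).choose n := by
  obtain ⟨a, rfl⟩ : ∃ a, m = a + 1 := ⟨m-1, by omega⟩
  simp only [Nat.add_sub_cancel]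
  have key : ((1 - X : Polynomial ℤ)^a * (1+X)^(a+1)).coeff (2*n)
      = ∑ i ∈ range (2*n+1), (-1:ℤ)^i * a.choose i * (a+1).choose (2*n-i) := by
    rw [coeff_mul, Finset.Nat.sum_antidiagonal_eq_sum_range_succ
      (fun x y => ((1 - X : Polynomial ℤ)^a).coeff x *
        ((1+X : Polynomial ℤ)^(a+1)).coeff y)]
    apply Finset.sum_congr rfl
    intro i _
    rw [coeff_one_sub_X_pow, coeff_one_add_X_pow]
  have key2 : (1 - X : Polynomial ℤ)^a * (1+X)^(a+1)
      = (1+X) * (1 - X^2)^a := by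
    rw [pow_succ, ← mul_assoc, ← mul_pow,
      show ((1:Polynomial ℤ) - X) * (1+X) = 1 - X^2 by ring]
    ring
  have key3 : ((1+X) * (1 - X^2 : Polynomial ℤ)^a).coeff (2*n)
      = (-1:ℤ)^n * a.choose n := by
    rw [add_mul, one_mul, coeff_add, show 2*n = (2*n-1)+1 by omega, coeff_X_mul,
      coeff_one_sub_X_sq_pow, coeff_one_sub_X_sq_pow,
      if_pos (by omega : ((2*n-1)+1) % 2 = 0), if_neg (by omega : ¬ (2*n-1) % 2 = 0),
      show ((2*n-1)+1)/2 = n by omega]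
    ring
  rw [← key, key2, key3]

private lemma lemmaB (m n : ℕ) :
    2 * ∑ k ∈ range (n+1), (m.choose (2*k+1) : ℤ) * m.choose (2*n - 2*k)
      = (2*m).choose (2*n+1) := by
  have hv : ((2*m).choose (2*n+1) : ℤ)
      = ∑ i ∈ range (2*n+2), (m.choose i : ℤ) * m.choose (2*n+1-i) := by
    have := Nat.add_choose_eq m m (2*n+1)
    rw [show m + m = 2*m by ring] at this
    rw [this, Finset.Nat.sum_antidiagonal_eq_sum_range_succ
      (fun a b => m.choose a * m.choose b)]
    push_cast
    rfl
  rw [hv, split_even_odd (fun i => (m.choose i : ℤ) * m.choose (2*n+1-i)) n]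
  have hodd : ∑ k ∈ range (n+1), (m.choose (2*k+1) : ℤ) * m.choose (2*n+1-(2*k+1))
      = ∑ k ∈ range (n+1), (m.choose (2*k+1) : ℤ) * m.choose (2*n-2*k) := by
    apply Finset.sum_congr rfl
    intro k hk
    rw [show 2*n+1-(2*k+1) = 2*n-2*k by omega]
  have heven : ∑ k ∈ range (n+1), (m.choose (2*k) : ℤ) * m.choose (2*n+1-2*k)
      = ∑ k ∈ range (n+1), (m.choose (2*k+1) : ℤ) * m.choose (2*n-2*k) := by
    rw [← Finset.sum_range_reflect]
    apply Finset.sum_congr rfl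
    intro k hk
    rw [Finset.mem_range] at hk
    rw [show 2*(n+1-1-k) = 2*n-2*k by omega,
      show 2*n+1-(2*n-2*k) = 2*k+1 by omega]
    ring
  rw [hodd, heven]
  ring

private lemma lemmaE (m n : ℕ) (hm : 1 ≤ m) (hn : 1 ≤ n) :
    2 * ∑ k ∈ range (n+1), ((m-1).choose (2*k) : ℤ) * m.choose (2*n - 2*k)
      = (2*m-1).choose (2*n) + (-1)^n * (m-1).choose n := by
  have hF : ((2*m-1).choose (2*n) : ℤ)
      = ∑ i ∈ range (2*n+1), ((m-1).choose i : ℤ) * m.choose (2*n-i) := by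
    have := Nat.add_choose_eq (m-1) m (2*n)
    rw [show m - 1 + m = 2*m-1 by omega] at this
    rw [this, Finset.Nat.sum_antidiagonal_eq_sum_range_succ
      (fun a b => (m-1).choose a * m.choose b)]
    push_cast
    rfl
  have hG := alt_vandermonde_s19 m n hm hn
  rw [split_even_odd' (fun i => ((m-1).choose i : ℤ) * m.choose (2*n-i)) n] at hF
  rw [split_even_odd' (fun i => (-1:ℤ)^i * (m-1).choose i * m.choose (2*n-i)) n] at hG
  have he : ∑ k ∈ range (n+1), (-1:ℤ)^(2*k) * (m-1).choose (2*k) * m.choose (2*n-2*k)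
      = ∑ k ∈ range (n+1), ((m-1).choose (2*k) : ℤ) * m.choose (2*n-2*k) := by
    apply Finset.sum_congr rfl
    intro k _
    rw [pow_mul]
    norm_num
  have ho : ∑ k ∈ range n, (-1:ℤ)^(2*k+1) * (m-1).choose (2*k+1) * m.choose (2*n-(2*k+1))
      = -∑ k ∈ range n, ((m-1).choose (2*k+1) : ℤ) * m.choose (2*n-(2*k+1)) := by
    rw [← Finset.sum_neg_distrib]
    apply Finset.sum_congr rfl
    intro k _
    rw [pow_succ, pow_mul]
    norm_num
  rw [he, ho] at hG
  linarith [hF, hG]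

private lemma main_identity (m n : ℕ) (hm : 1 ≤ m) (hn : 1 ≤ n) :
    ∑ k ∈ range (n + 1),
        (4 * (k : ℤ) - 2 * (n : ℤ) + 1) * (m.choose (2 * k + 1)) *
          (m.choose (2 * n - 2 * k))
      = (-1)^n * m * ((m - 1).choose n) := by
  have hterm : ∀ k : ℕ,
      (4 * (k : ℤ) - 2 * (n : ℤ) + 1) * (m.choose (2 * k + 1)) * (m.choose (2 * n - 2 * k))
        = 2 * (m : ℤ) * (((m-1).choose (2*k) : ℤ) * m.choose (2*n - 2*k))
          - (2 * (n:ℤ) + 1) * ((m.choose (2*k+1) : ℤ) * m.choose (2*n - 2*k)) := by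
    intro k
    have h1 : (m : ℤ) * ((m-1).choose (2*k)) = (m.choose (2*k+1)) * (2*(k:ℤ)+1) := by
      have := Nat.add_one_mul_choose_eq (m-1) (2*k)
      rw [show m - 1 + 1 = m by omega] at this
      exact_mod_cast this
    linear_combination (-2 * (m.choose (2*n-2*k) : ℤ)) * h1
  rw [Finset.sum_congr rfl (fun k _ => hterm k), Finset.sum_sub_distrib,
    ← Finset.mul_sum, ← Finset.mul_sum]
  have hB := lemmaB m n
  have hE := lemmaE m n hm hn
  have h2 : ((2*(n:ℤ)+1)) * ((2*m).choose (2*n+1)) = 2*(m:ℤ) * ((2*m-1).choose (2*n)) := by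
    have := Nat.add_one_mul_choose_eq (2*m-1) (2*n)
    rw [show 2*m - 1 + 1 = 2*m by omega] at this
    have h' := congrArg (Nat.cast : ℕ → ℤ) this
    push_cast at h'
    linarith
  have h3 : (2:ℤ) ≠ 0 := by norm_num
  apply mul_left_cancel₀ h3
  linear_combination 2*(m:ℤ)*hE - (2*(n:ℤ)+1)*hB - h2

theorem stmt_19 (r j : ℕ) (hj1 : 1 ≤ j) (hj2 : j ≤ r - 1) (m n : ℕ)
    (hm : m = 2 * r) (hn : n = r - j) :
    (-1 : ℤ) ^ n *
      ∑ k ∈ Finset.range (n + 1),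
        (4 * (k : ℤ) - 2 * (n : ℤ) + 1) * (m.choose (2 * k + 1)) *
          (m.choose (2 * n - 2 * k)) =
    (m : ℤ) * ((m - 1).choose n) := by
  have hr : 2 ≤ r := by omega
  have hm1 : 1 ≤ m := by omega
  have hn1 : 1 ≤ n := by omega
  rw [main_identity m n hm1 hn1]
  have h2 : ((-1:ℤ)^n) * ((-1:ℤ)^n) = 1 := by
    rw [← pow_add]; exact Even.neg_one_pow ⟨n, rfl⟩
  linear_combination ((m:ℤ) * ((m-1).choose n)) * h2
end
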